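/- Let X be an n×n symmetric matrix whose sparsity pattern forms a chordal graph, and let {Z_1,...,Z_p} be clique matrices for the maximal cliques with selection matrices P_i. Then X is positive semidefinite if and only if X can be written as X = Σ_{i=1}^p P_iᵀ Z_i P_i with every Z_i positive semidefinite. -/

import Mathlib

open Finset Matrix

/-- A simple graph is chordal if every cycle of length greater than 3 has a chord:
two vertices of the cycle that are adjacent in the graph via an edge not in the cycle. -/
def SimpleGraph.IsChordal {V : Type*} (G : SimpleGraph V) : Prop :=
  ∀ ⦃v : V⦄ (w : G.Walk v v), w.IsCycle → 3 < w.length →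
    ∃ u₁ u₂, u₁ ∈ w.support ∧ u₂ ∈ w.support ∧ G.Adj u₁ u₂ ∧ s(u₁, u₂) ∉ w.edges

/-- The selection matrix `P_s` of an index subset `s ⊆ Fin n`. -/
def selMat {n : ℕ} (s : Finset (Fin n)) : Matrix s (Fin n) ℝ :=
  Matrix.of fun a k => if (a : Fin n) = k then 1 else 0

set_option linter.unusedSectionVars false
set_option maxHeartbeats 1600000

namespace ChordalAux

open SimpleGraph

variable {V : Type*} [DecidableEq V] {G : SimpleGraph V}

def ReachIn (G : SimpleGraph V) (s : Finset V) (a b : V) : Prop :=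
  ∃ w : G.Walk a b, ∀ v ∈ w.support, v ∈ s

lemma ReachIn.mem_left {s : Finset V} {a b} (h : ReachIn G s a b) : a ∈ s := by
  obtain ⟨w, hw⟩ := h; exact hw a w.start_mem_support

lemma ReachIn.mem_right {s : Finset V} {a b} (h : ReachIn G s a b) : b ∈ s := by
  obtain ⟨w, hw⟩ := h; exact hw b w.end_mem_support

lemma ReachIn.refl {s : Finset V} {a} (ha : a ∈ s) : ReachIn G s a a :=
  ⟨SimpleGraph.Walk.nil, by simp [ha]⟩

lemma ReachIn.symm {s : Finset V} {a b} (h : ReachIn G s a b) : ReachIn G s b a := by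
  obtain ⟨w, hw⟩ := h
  exact ⟨w.reverse, fun v hv => hw v (by simpa [SimpleGraph.Walk.support_reverse] using hv)⟩

lemma ReachIn.trans {s : Finset V} {a b c} (h : ReachIn G s a b) (h' : ReachIn G s b c) :
    ReachIn G s a c := by
  obtain ⟨w, hw⟩ := h; obtain ⟨w', hw'⟩ := h'
  refine ⟨w.append w', fun v hv => ?_⟩
  rcases (SimpleGraph.Walk.mem_support_append_iff _ _).1 hv with h | h
  · exact hw v h
  · exact hw' v h

lemma ReachIn.adj {s : Finset V} {a b c} (h : ReachIn G s a b) (hbc : G.Adj b c) (hc : c ∈ s) :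
    ReachIn G s a c :=
  h.trans ⟨SimpleGraph.Walk.cons hbc SimpleGraph.Walk.nil, by
    intro v hv; simp at hv; rcases hv with rfl | rfl
    · exact h.mem_right
    · exact hc⟩

lemma reachIn_of_mem_support {s : Finset V} {a b c} (w : G.Walk a b)
    (hw : ∀ v ∈ w.support, v ∈ s) (hc : c ∈ w.support) : ReachIn G s a c :=
  ⟨w.takeUntil c hc, fun v hv => hw v (w.support_takeUntil_subset hc hv)⟩

def InternalIn (A : Finset V) {x y : V} (w : G.Walk x y) : Prop :=
  ∀ v ∈ w.support, v = x ∨ v = y ∨ v ∈ A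

lemma edge_mem_of_length_one {u v : V} (w : G.Walk u v) (h : w.length = 1) :
    s(u, v) ∈ w.edges := by
  cases w with
  | nil => simp at h
  | cons h' w' =>
    simp [SimpleGraph.Walk.length_cons] at h
    have := h.eq
    subst this
    simp

lemma shortcut {x y : V} (A : Finset V) (p : G.Walk x y)
    (hA : InternalIn A p)
    (hmin : ∀ q : G.Walk x y, q.IsPath → InternalIn A q → p.length ≤ q.length)
    (u₁ u₂ : V) (h1 : u₁ ∈ p.support) (h2 : u₂ ∈ p.support)
    (hadj : G.Adj u₁ u₂) (hne : s(u₁, u₂) ∉ p.edges) : False := by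
  -- it suffices to produce a strictly shorter walk inside p.support
  have key : ∀ q : G.Walk x y, (∀ v ∈ q.support, v ∈ p.support) →
      q.length < p.length → False := by
    intro q hsub hlen
    have hb := hmin q.bypass q.bypass_isPath (fun v hv => by
      rcases hA v (hsub v (q.support_bypass_subset hv)) with h | h | h
      · exact Or.inl h
      · exact Or.inr (Or.inl h)
      · exact Or.inr (Or.inr h))
    have := q.length_bypass_le
    omega
  have hspec := SimpleGraph.Walk.take_spec p h1
  set t := p.takeUntil u₁ h1 with ht
  set d := p.dropUntil u₁ h1 with hd
  have hlen_p : t.length + d.length = p.length := by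
    rw [← hspec]; rw [SimpleGraph.Walk.length_append]
  have h2' : u₂ ∈ t.support ∨ u₂ ∈ d.support := by
    have : u₂ ∈ (t.append d).support := by rw [hspec]; exact h2
    exact (SimpleGraph.Walk.mem_support_append_iff _ _).1 this
  rcases h2' with h2t | h2d
  · -- u₂ occurs before u₁
    set m := t.takeUntil u₂ h2t with hm
    set e := t.dropUntil u₂ h2t with he
    have hlen_t : m.length + e.length = t.length := by
      rw [← SimpleGraph.Walk.take_spec t h2t, SimpleGraph.Walk.length_append]
    have he2 : 2 ≤ e.length := by
      rcases Nat.lt_or_ge e.length 2 with h | h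
      · interval_cases hq : e.length
        · exact absurd (SimpleGraph.Walk.eq_of_length_eq_zero hq) hadj.ne'
        · exfalso
          have : s(u₂, u₁) ∈ e.edges := edge_mem_of_length_one e hq
          have : s(u₂, u₁) ∈ p.edges :=
            p.edges_takeUntil_subset h1 (t.edges_dropUntil_subset h2t this)
          rw [Sym2.eq_swap] at this
          exact hne this
      · exact h
    refine key (m.append (SimpleGraph.Walk.cons hadj.symm d)) ?_ ?_
    · intro v hv
      rcases (SimpleGraph.Walk.mem_support_append_iff _ _).1 hv with h | h
      · exact p.support_takeUntil_subset h1 (t.support_takeUntil_subset h2t h)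
      · have h' : v = u₂ ∨ v ∈ d.support := by simpa using h
        rcases h' with rfl | h'
        · exact h2
        · exact p.support_dropUntil_subset h1 h'
    · rw [SimpleGraph.Walk.length_append, SimpleGraph.Walk.length_cons]
      omega
  · -- u₂ occurs after u₁
    set m := d.takeUntil u₂ h2d with hm
    set e := d.dropUntil u₂ h2d with he
    have hlen_d : m.length + e.length = d.length := by
      rw [← SimpleGraph.Walk.take_spec d h2d, SimpleGraph.Walk.length_append]
    have hm2 : 2 ≤ m.length := by
      rcases Nat.lt_or_ge m.length 2 with h | h
      · interval_cases hq : m.length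
        · exact absurd (SimpleGraph.Walk.eq_of_length_eq_zero hq) hadj.ne
        · exfalso
          have : s(u₁, u₂) ∈ m.edges := edge_mem_of_length_one m hq
          have : s(u₁, u₂) ∈ p.edges :=
            p.edges_dropUntil_subset h1 (d.edges_takeUntil_subset h2d this)
          exact hne this
      · exact h
    refine key (t.append (SimpleGraph.Walk.cons hadj e)) ?_ ?_
    · intro v hv
      rcases (SimpleGraph.Walk.mem_support_append_iff _ _).1 hv with h | h
      · exact p.support_takeUntil_subset h1 h
      · have h' : v = u₁ ∨ v ∈ e.support := by simpa using h
        rcases h' with rfl | h'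
        · exact h1
        · exact p.support_dropUntil_subset h1 (d.support_dropUntil_subset h2d h')
    · rw [SimpleGraph.Walk.length_append, SimpleGraph.Walk.length_cons]
      omega

/-- extract a minimal-length path with internal support in `A` -/
lemma exists_min_path {a b : V} (A : Finset V) (h : ∃ w : G.Walk a b, InternalIn A w) :
    ∃ p : G.Walk a b, p.IsPath ∧ InternalIn A p ∧
      ∀ q : G.Walk a b, q.IsPath → InternalIn A q → p.length ≤ q.length := by
  obtain ⟨w, hw⟩ := h
  have hne : (w.bypass.length) ∈ {l | ∃ p : G.Walk a b, p.IsPath ∧ InternalIn A p ∧ p.length = l} := by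
    refine ⟨w.bypass, w.bypass_isPath, ?_, rfl⟩
    intro v hv
    exact hw v (w.support_bypass_subset hv)
  obtain ⟨p, hp, hint, hlen⟩ := Nat.sInf_mem ⟨_, hne⟩
  exact ⟨p, hp, hint, fun q hq hiq => hlen ▸ Nat.sInf_le ⟨q, hq, hiq, rfl⟩⟩

lemma no_sep_pair (hch : G.IsChordal) {x y : V} (A B : Finset V)
    (hxy : x ≠ y) (hnadj : ¬G.Adj x y)
    (hAB : ∀ u ∈ A, ∀ v ∈ B, u ≠ v ∧ ¬G.Adj u v)
    (hpA : ∃ w : G.Walk x y, InternalIn A w)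
    (hpB : ∃ w : G.Walk y x, InternalIn B w) : False := by
  obtain ⟨p, hp, hpi, hpmin⟩ := exists_min_path A hpA
  obtain ⟨q, hq, hqi, hqmin⟩ := exists_min_path B hpB
  -- lengths at least 2
  have hlp : 2 ≤ p.length := by
    rcases Nat.lt_or_ge p.length 2 with h | h
    · interval_cases hl : p.length
      · exact absurd (SimpleGraph.Walk.eq_of_length_eq_zero hl) hxy
      · exact absurd (SimpleGraph.Walk.adj_of_mem_edges p (edge_mem_of_length_one p hl)) hnadj
    · exact h
  have hlq : 2 ≤ q.length := by
    rcases Nat.lt_or_ge q.length 2 with h | h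
    · interval_cases hl : q.length
      · exact absurd (SimpleGraph.Walk.eq_of_length_eq_zero hl).symm hxy
      · exact absurd (SimpleGraph.Walk.adj_of_mem_edges q (edge_mem_of_length_one q hl)).symm hnadj
    · exact h
  -- no vertex is in both A-side and B-side interiors
  have hmemp : ∀ v ∈ p.support, v = x ∨ v = y ∨ v ∈ A := hpi
  have hmemq : ∀ v ∈ q.support, v = x ∨ v = y ∨ v ∈ B := fun v hv => by
    rcases hqi v hv with h | h | h
    · exact Or.inr (Or.inl h)
    · exact Or.inl h
    · exact Or.inr (Or.inr h)
  have hxtp : x ∉ p.support.tail := by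
    have := hp.support_nodup
    rw [p.support_eq_cons] at this
    exact (List.nodup_cons.1 this).1
  have hytq : y ∉ q.support.tail := by
    have := hq.support_nodup
    rw [q.support_eq_cons] at this
    exact (List.nodup_cons.1 this).1
  -- common support is {x, y}
  have hcommon : ∀ v, v ∈ p.support → v ∈ q.support → v = x ∨ v = y := by
    intro v hvp hvq
    rcases hmemp v hvp with h | h | h
    · exact Or.inl h
    · exact Or.inr h
    · rcases hmemq v hvq with h' | h' | h'
      · exact Or.inl h'
      · exact Or.inr h'
      · exact absurd rfl (hAB v h v h').1
  -- the cycle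
  set c : G.Walk x x := p.append q with hc
  have hcsupp : ∀ v, v ∈ c.support ↔ v ∈ p.support ∨ v ∈ q.support :=
    fun v => SimpleGraph.Walk.mem_support_append_iff _ _
  have hcedges : c.edges = p.edges ++ q.edges := SimpleGraph.Walk.edges_append _ _
  have hclen : c.length = p.length + q.length := SimpleGraph.Walk.length_append _ _
  have hcycle : c.IsCycle := by
    refine ⟨⟨⟨?_⟩, ?_⟩, ?_⟩
    · -- edges nodup
      rw [hcedges]
      refine List.Nodup.append hp.isTrail.edges_nodup hq.isTrail.edges_nodup ?_
      intro e hep heq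
      induction e with
      | h a b =>
        have hap := SimpleGraph.Walk.fst_mem_support_of_mem_edges p hep
        have hbp := SimpleGraph.Walk.snd_mem_support_of_mem_edges p hep
        have haq := SimpleGraph.Walk.fst_mem_support_of_mem_edges q heq
        have hbq := SimpleGraph.Walk.snd_mem_support_of_mem_edges q heq
        have hab : G.Adj a b := SimpleGraph.Walk.adj_of_mem_edges p hep
        rcases hcommon a hap haq with rfl | rfl <;> rcases hcommon b hbp hbq with rfl | rfl
        · exact hab.ne rfl
        · exact hnadj hab
        · exact hnadj hab.symm
        · exact hab.ne rfl
    · -- nonempty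
      intro h
      have : c.length = 0 := by rw [h]; rfl
      omega
    · -- support tail nodup
      rw [hc, SimpleGraph.Walk.tail_support_append]
      refine List.Nodup.append ?_ ?_ ?_
      · have := hp.support_nodup; rw [p.support_eq_cons] at this
        exact (List.nodup_cons.1 this).2
      · have := hq.support_nodup; rw [q.support_eq_cons] at this
        exact (List.nodup_cons.1 this).2
      · intro v hvp hvq
        have hvp' : v ∈ p.support := List.mem_of_mem_tail hvp
        have hvq' : v ∈ q.support := List.mem_of_mem_tail hvq
        rcases hcommon v hvp' hvq' with rfl | rfl
        · exact hxtp hvp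
        · exact hytq hvq
  obtain ⟨u₁, u₂, hu1, hu2, huadj, hue⟩ := hch c hcycle (by omega)
  have hue1 : s(u₁, u₂) ∉ p.edges := fun h => hue (by rw [hcedges]; exact List.mem_append_left _ h)
  have hue2 : s(u₁, u₂) ∉ q.edges := fun h => hue (by rw [hcedges]; exact List.mem_append_right _ h)
  have hint : ∀ u, u ∈ c.support → u ∉ p.support → u ∈ B := by
    intro u hu hup
    rcases (hcsupp u).1 hu with h | h
    · exact absurd h hup
    · rcases hmemq u h with rfl | rfl | h'
      · exact absurd p.start_mem_support hup
      · exact absurd p.end_mem_support hup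
      · exact h'
  have hintA : ∀ u, u ∈ c.support → u ∉ q.support → u ∈ A := by
    intro u hu huq
    rcases (hcsupp u).1 hu with h | h
    · rcases hmemp u h with rfl | rfl | h'
      · exact absurd q.end_mem_support huq
      · exact absurd q.start_mem_support huq
      · exact h'
    · exact absurd h huq
  by_cases h1p : u₁ ∈ p.support <;> by_cases h2p : u₂ ∈ p.support
  · exact shortcut A p hpi hpmin u₁ u₂ h1p h2p huadj hue1
  · by_cases h1q : u₁ ∈ q.support
    · have h2q : u₂ ∈ q.support := by
        rcases (hcsupp u₂).1 hu2 with h | h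
        · exact absurd h h2p
        · exact h
      exact shortcut B q hqi hqmin u₁ u₂ h1q h2q huadj hue2
    · have hA1 : u₁ ∈ A := hintA u₁ hu1 h1q
      have hB2 : u₂ ∈ B := hint u₂ hu2 h2p
      exact (hAB u₁ hA1 u₂ hB2).2 huadj
  · by_cases h2q : u₂ ∈ q.support
    · have h1q : u₁ ∈ q.support := by
        rcases (hcsupp u₁).1 hu1 with h | h
        · exact absurd h h1p
        · exact h
      exact shortcut B q hqi hqmin u₁ u₂ h1q h2q huadj hue2
    · have hA2 : u₂ ∈ A := hintA u₂ hu2 h2q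
      have hB1 : u₁ ∈ B := hint u₁ hu1 h1p
      exact (hAB u₂ hA2 u₁ hB1).2 huadj.symm
  · have h1q : u₁ ∈ q.support := by
      rcases (hcsupp u₁).1 hu1 with h | h
      · exact absurd h h1p
      · exact h
    have h2q : u₂ ∈ q.support := by
      rcases (hcsupp u₂).1 hu2 with h | h
      · exact absurd h h2p
      · exact h
    exact shortcut B q hqi hqmin u₁ u₂ h1q h2q huadj hue2

/-- `v` is simplicial within the vertex set `s`. -/
def SimplIn (G : SimpleGraph V) (s : Finset V) (v : V) : Prop :=
  v ∈ s ∧ ∀ u ∈ s, ∀ w ∈ s, G.Adj v u → G.Adj v w → u ≠ w → G.Adj u w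

lemma dirac [Fintype V] (hch : G.IsChordal) :
    ∀ (N : ℕ) (s : Finset V), s.card ≤ N → s.Nonempty →
      (∀ x ∈ s, ∀ y ∈ s, x ≠ y → G.Adj x y) ∨
      (∃ v w, SimplIn G s v ∧ SimplIn G s w ∧ v ≠ w ∧ ¬G.Adj v w) := by
  intro N
  induction N with
  | zero =>
    intro s hcard hne
    simp [Finset.card_eq_zero.1 (Nat.le_zero.1 hcard)] at hne
  | succ N IH =>
    intro s hcard hne
    classical
    by_cases hcomp : ∀ x ∈ s, ∀ y ∈ s, x ≠ y → G.Adj x y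
    · exact Or.inl hcomp
    right
    push_neg at hcomp
    obtain ⟨a, ha, b, hb, hab, hnadj⟩ := hcomp
    -- the set of (a,b)-separators inside s
    set SepSet : Finset (Finset V) :=
      ((s \ {a, b}).powerset).filter (fun S => ¬ ReachIn G (s \ S) a b) with hSepSet
    have hS0 : (s \ {a, b}) ∈ SepSet := by
      rw [hSepSet, Finset.mem_filter]
      refine ⟨Finset.mem_powerset_self _, ?_⟩
      rintro ⟨w, hw⟩
      obtain ⟨u, hadj, w', rfl⟩ := SimpleGraph.Walk.exists_eq_cons_of_ne hab w
      have hu : u ∈ s \ (s \ {a, b}) := hw u (by simp)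
      have hu2 : u ∈ ({a, b} : Finset V) := by
        simp only [Finset.mem_sdiff, Finset.mem_insert, Finset.mem_singleton] at hu ⊢
        tauto
      simp only [Finset.mem_insert, Finset.mem_singleton] at hu2
      rcases hu2 with rfl | rfl
      · exact hadj.ne rfl
      · exact hnadj hadj
    obtain ⟨S, hSmem, hSmin⟩ := Finset.exists_min_image SepSet Finset.card ⟨_, hS0⟩
    rw [hSepSet, Finset.mem_filter, Finset.mem_powerset] at hSmem
    obtain ⟨hSsub, hsep⟩ := hSmem
    have hSs : S ⊆ s := hSsub.trans (Finset.sdiff_subset)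
    have haS : a ∉ S := fun h => (Finset.mem_sdiff.1 (hSsub h)).2 (by simp)
    have hbS : b ∉ S := fun h => (Finset.mem_sdiff.1 (hSsub h)).2 (by simp)
    have ha' : a ∈ s \ S := Finset.mem_sdiff.2 ⟨ha, haS⟩
    have hb' : b ∈ s \ S := Finset.mem_sdiff.2 ⟨hb, hbS⟩
    -- reachable sets
    set R : V → Finset V := fun z => (s \ S).filter (fun x => ReachIn G (s \ S) z x) with hR
    have hRmem : ∀ z x, x ∈ R z ↔ x ∈ s \ S ∧ ReachIn G (s \ S) z x := by
      intro z x; rw [hR]; exact Finset.mem_filter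
    have hRclosed : ∀ z x u, x ∈ R z → u ∈ s \ S → G.Adj x u → u ∈ R z := by
      intro z x u hx hu hadj
      exact (hRmem z u).2 ⟨hu, ((hRmem z x).1 hx).2.adj hadj hu⟩
    have hdisj : ∀ x, x ∈ R a → x ∈ R b → False := by
      intro x hxa hxb
      exact hsep (((hRmem a x).1 hxa).2.trans ((hRmem b x).1 hxb).2.symm)
    have hsepba : ¬ ReachIn G (s \ S) b a := fun h => hsep h.symm
    -- minimality, both orientations
    have hminab : ∀ S' : Finset V, S' ⊆ s \ {a, b} → ¬ReachIn G (s \ S') a b →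
        S.card ≤ S'.card := by
      intro S' h1 h2
      exact hSmin S' (by rw [hSepSet, Finset.mem_filter, Finset.mem_powerset]; exact ⟨h1, h2⟩)
    have hminba : ∀ S' : Finset V, S' ⊆ s \ {b, a} → ¬ReachIn G (s \ S') b a →
        S.card ≤ S'.card := by
      intro S' h1 h2
      refine hminab S' (by rwa [Finset.pair_comm]) (fun h => h2 h.symm)
    -- every separator vertex has a neighbor in each reachable side
    have nbr : ∀ (z w : V), z ∉ S → w ∉ S →
        ¬ReachIn G (s \ S) z w →
        (∀ S' : Finset V, S' ⊆ s \ {z, w} → ¬ReachIn G (s \ S') z w → S.card ≤ S'.card) →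
        ∀ u ∈ S, ∃ v, v ∈ R z ∧ G.Adj u v := by
      intro z w hzS hwS hsep' hmin' u huS
      have h1 : S.erase u ⊆ s \ {z, w} := by
        intro x hx
        have hx' := Finset.mem_of_mem_erase hx
        have := hSsub hx'
        rw [Finset.mem_sdiff] at this ⊢
        refine ⟨this.1, ?_⟩
        simp only [Finset.mem_insert, Finset.mem_singleton]
        rintro (rfl | rfl)
        · exact hzS hx'
        · exact hwS hx'
      have h2 : ReachIn G (s \ S.erase u) z w := by
        by_contra h
        have hle := hmin' _ h1 h
        have hlt : (S.erase u).card < S.card := Finset.card_erase_lt_of_mem huS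
        omega
      obtain ⟨wk, hwk⟩ := h2
      have hu_mem : u ∈ wk.support := by
        by_contra hu
        refine hsep' ⟨wk, fun v hv => ?_⟩
        have hv' := hwk v hv
        rw [Finset.mem_sdiff] at hv' ⊢
        refine ⟨hv'.1, fun hvS => ?_⟩
        have : v ≠ u := fun h => hu (h ▸ hv)
        exact hv'.2 (Finset.mem_erase.2 ⟨this, hvS⟩)
      set pk := wk.takeUntil u hu_mem with hpk
      have hcount : List.count u pk.support = 1 := wk.count_support_takeUntil_eq_one hu_mem
      have hpksup : ∀ v ∈ pk.support, v ∈ s \ S.erase u :=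
        fun v hv => hwk v (wk.support_takeUntil_subset _ hv)
      have hne_uz : u ≠ z := fun h => hzS (h ▸ huS)
      obtain ⟨v, hadj, qk, hqk⟩ := SimpleGraph.Walk.exists_eq_cons_of_ne hne_uz pk.reverse
      have hsup_rev : pk.reverse.support = u :: qk.support := by
        rw [hqk, SimpleGraph.Walk.support_cons]
      have hucount : List.count u pk.reverse.support = 1 := by
        rw [SimpleGraph.Walk.support_reverse, List.count_reverse]; exact hcount
      have hu_not_qk : u ∉ qk.support := by
        rw [hsup_rev] at hucount
        simp only [List.count_cons_self] at hucount
        intro h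
        have hpos : 0 < List.count u qk.support := List.count_pos_iff.2 h
        omega
      have hqksup : ∀ x ∈ qk.support, x ∈ s \ S := by
        intro x hx
        have hxp : x ∈ pk.support := by
          have : x ∈ pk.reverse.support := by rw [hsup_rev]; exact List.mem_cons_of_mem _ hx
          rwa [SimpleGraph.Walk.support_reverse, List.mem_reverse] at this
        have hx' := hpksup x hxp
        rw [Finset.mem_sdiff] at hx' ⊢
        refine ⟨hx'.1, fun hxS => ?_⟩
        have hxu : x ≠ u := fun h => hu_not_qk (h ▸ hx)
        exact hx'.2 (Finset.mem_erase.2 ⟨hxu, hxS⟩)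
      refine ⟨v, ?_, hadj⟩
      have hv_mem : v ∈ s \ S := hqksup v qk.start_mem_support
      refine (hRmem z v).2 ⟨hv_mem, ?_⟩
      exact ReachIn.symm ⟨qk, hqksup⟩
    have nbra := nbr a b haS hbS hsep hminab
    have nbrb := nbr b a hbS haS hsepba hminba
    -- reachable sides are mutually nonadjacent
    have hAB : ∀ u ∈ R a, ∀ v ∈ R b, u ≠ v ∧ ¬G.Adj u v := by
      intro u hu v hv
      constructor
      · rintro rfl; exact hdisj u hu hv
      · intro hadj
        exact hdisj v (hRclosed a u v hu ((hRmem b v).1 hv).1 hadj) hv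
    -- connect two vertices of S through a reachable side
    have conn : ∀ (z : V) (x y : V), x ∈ S → y ∈ S → x ≠ y →
        (∀ u ∈ S, ∃ v, v ∈ R z ∧ G.Adj u v) →
        ∃ w : G.Walk x y, InternalIn (R z) w := by
      intro z x y hx hy hxy hnb
      obtain ⟨vx, hvx, hadjx⟩ := hnb x hx
      obtain ⟨vy, hvy, hadjy⟩ := hnb y hy
      have hreach : ReachIn G (s \ S) vx vy :=
        (((hRmem z vx).1 hvx).2.symm).trans ((hRmem z vy).1 hvy).2
      obtain ⟨wk, hwk⟩ := hreach
      have hwkR : ∀ v ∈ wk.support, v ∈ R z := by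
        intro v hv
        refine (hRmem z v).2 ⟨hwk v hv, ?_⟩
        exact (((hRmem z vx).1 hvx).2).trans (reachIn_of_mem_support wk hwk hv)
      refine ⟨SimpleGraph.Walk.cons hadjx (wk.concat hadjy.symm), ?_⟩
      intro v hv
      rw [SimpleGraph.Walk.support_cons] at hv
      rcases List.mem_cons.1 hv with rfl | hv
      · left; rfl
      · rw [SimpleGraph.Walk.support_concat, List.mem_append] at hv
        rcases hv with hv | hv
        rotate_left
        · right; left; simpa using hv
        · exact Or.inr (Or.inr (hwkR v hv))
    -- S is a clique
    have hSclique : ∀ x ∈ S, ∀ y ∈ S, x ≠ y → G.Adj x y := by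
      intro x hx y hy hxy
      by_contra hnadjxy
      exact no_sep_pair hch (R a) (R b) hxy hnadjxy hAB
        (conn a x y hx hy hxy nbra)
        (conn b y x hy hx hxy.symm nbrb)
    -- find a simplicial vertex in each side
    have side : ∀ (z w : V), z ∈ s → z ∉ S → w ∈ s → w ∉ S →
        ¬ReachIn G (s \ S) z w → ∃ v, v ∈ R z ∧ SimplIn G s v := by
      intro z w hz hzS hw hwS hsep'
      set A' := R z ∪ S with hA'
      have hzR : z ∈ R z := (hRmem z z).2 ⟨Finset.mem_sdiff.2 ⟨hz, hzS⟩,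
        ReachIn.refl (Finset.mem_sdiff.2 ⟨hz, hzS⟩)⟩
      have hA's : A' ⊆ s := by
        intro x hx
        rcases Finset.mem_union.1 hx with h | h
        · exact (Finset.mem_sdiff.1 ((hRmem z x).1 h).1).1
        · exact hSs h
      have hwA' : w ∉ A' := by
        intro h
        rcases Finset.mem_union.1 h with h | h
        · exact hsep' ((hRmem z w).1 h).2
        · exact hwS h
      have hlt : A'.card < s.card :=
        Finset.card_lt_card (Finset.ssubset_iff_of_subset hA's |>.2 ⟨w, hw, hwA'⟩)
      have hcard' : A'.card ≤ N := by omega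
      -- neighbors (in s) of a vertex of R z stay in A'
      have hnbhd : ∀ v ∈ R z, ∀ u ∈ s, G.Adj v u → u ∈ A' := by
        intro v hv u hu hadj
        by_cases huS : u ∈ S
        · exact Finset.mem_union_right _ huS
        · exact Finset.mem_union_left _
            (hRclosed z v u hv (Finset.mem_sdiff.2 ⟨hu, huS⟩) hadj)
      have hlift : ∀ v ∈ R z, SimplIn G A' v → SimplIn G s v := by
        intro v hv hsimp
        refine ⟨hA's hsimp.1, fun u hu u' hu' hadj hadj' hne' => ?_⟩
        exact hsimp.2 u (hnbhd v hv u hu hadj) u' (hnbhd v hv u' hu' hadj') hadj hadj' hne'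
      rcases IH A' hcard' ⟨z, Finset.mem_union_left _ hzR⟩ with hcomp' | ⟨v₁, v₂, h₁, h₂, hne12, hnadj12⟩
      · exact ⟨z, hzR, hlift z hzR
          ⟨Finset.mem_union_left _ hzR,
            fun u hu u' hu' _ _ hne' => hcomp' u hu u' hu' hne'⟩⟩
      · have : v₁ ∈ R z ∨ v₂ ∈ R z := by
          by_contra h
          push_neg at h
          have h1 : v₁ ∈ S := (Finset.mem_union.1 h₁.1).resolve_left h.1
          have h2 : v₂ ∈ S := (Finset.mem_union.1 h₂.1).resolve_left h.2
          exact hnadj12 (hSclique v₁ h1 v₂ h2 hne12)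
        rcases this with h | h
        · exact ⟨v₁, h, hlift v₁ h h₁⟩
        · exact ⟨v₂, h, hlift v₂ h h₂⟩
    obtain ⟨va, hva, hsa⟩ := side a b ha haS hb hbS hsep
    obtain ⟨vb, hvb, hsb⟩ := side b a hb hbS ha haS hsepba
    refine ⟨va, vb, hsa, hsb, (hAB va hva vb hvb).1, (hAB va hva vb hvb).2⟩

lemma exists_simplicial [Fintype V] (hch : G.IsChordal) (s : Finset V) (hs : s.Nonempty) :
    ∃ v, SimplIn G s v := by
  rcases dirac hch s.card s le_rfl hs with hcomp | ⟨v, _, hv, _⟩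
  · obtain ⟨v, hv⟩ := hs
    exact ⟨v, hv, fun u hu w hw _ _ hne => hcomp u hu w hw hne⟩
  · exact ⟨v, hv⟩

/-- Cauchy–Schwarz for a real PSD matrix -/
lemma psd_cs {m : Type*} [Fintype m] {X : Matrix m m ℝ} (hX : X.PosSemidef) (a b : m → ℝ) :
    (a ⬝ᵥ X *ᵥ b) ^ 2 ≤ (a ⬝ᵥ X *ᵥ a) * (b ⬝ᵥ X *ᵥ b) := by
  have hsym : Xᵀ = X := by
    have := hX.1
    rwa [Matrix.IsHermitian, Matrix.conjTranspose_eq_transpose_of_trivial] at this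
  have hswap : ∀ u v : m → ℝ, u ⬝ᵥ X *ᵥ v = v ⬝ᵥ X *ᵥ u := by
    intro u v
    rw [Matrix.dotProduct_mulVec, ← Matrix.mulVec_transpose, hsym, dotProduct_comm]
  have key : ∀ t : ℝ, 0 ≤ (a ⬝ᵥ X *ᵥ a) * (t * t) + (2 * (a ⬝ᵥ X *ᵥ b)) * t + (b ⬝ᵥ X *ᵥ b) := by
    intro t
    have h := hX.dotProduct_mulVec_nonneg (t • a + b)
    rw [star_trivial] at h
    have hexp : (t • a + b) ⬝ᵥ X *ᵥ (t • a + b) =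
        (a ⬝ᵥ X *ᵥ a) * (t * t) + (2 * (a ⬝ᵥ X *ᵥ b)) * t + (b ⬝ᵥ X *ᵥ b) := by
      rw [Matrix.mulVec_add, Matrix.mulVec_smul]
      rw [add_dotProduct, smul_dotProduct]
      simp only [dotProduct_add, dotProduct_smul, smul_eq_mul]
      rw [hswap b a]
      ring
    rw [hexp] at h
    exact h
  have hd := discrim_le_zero key
  rw [discrim] at hd
  nlinarith [hd]

lemma outer_quad {m : Type*} [Fintype m] (u x : m → ℝ) :
    x ⬝ᵥ (Matrix.of fun a b => u a * u b) *ᵥ x = (∑ b, u b * x b) ^ 2 := by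
  simp only [dotProduct, Matrix.mulVec, Matrix.of_apply]
  rw [pow_two, Finset.sum_mul]
  refine Finset.sum_congr rfl fun a _ => ?_
  rw [Finset.mul_sum, Finset.mul_sum]
  exact Finset.sum_congr rfl fun b _ => by ring

lemma outer_psd {m : Type*} [Fintype m] (u : m → ℝ) :
    (Matrix.of fun a b => u a * u b).PosSemidef := by
  refine Matrix.PosSemidef.of_dotProduct_mulVec_nonneg ?_ ?_
  · rw [Matrix.IsHermitian, Matrix.conjTranspose_eq_transpose_of_trivial]
    ext a b
    simp [Matrix.transpose_apply, mul_comm]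
  · intro x
    rw [star_trivial, outer_quad]
    positivity


section Sel
variable {n p : ℕ}

lemma sum_ite_coe (c : Finset (Fin n)) (j : Fin n) (f : c → ℝ) :
    (∑ b : c, f b * (if (b : Fin n) = j then 1 else 0)) =
      if hj : j ∈ c then f ⟨j, hj⟩ else 0 := by
  split_ifs with hj
  · rw [Finset.sum_eq_single (⟨j, hj⟩ : c)]
    · simp
    · intro b _ hb
      have : (b : Fin n) ≠ j := fun h => hb (Subtype.ext h)
      simp [this]
    · simp
  · refine Finset.sum_eq_zero fun b _ => ?_
    have : (b : Fin n) ≠ j := fun h => hj (h ▸ b.2)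
    simp [this]

lemma sel_apply (c : Finset (Fin n)) (Z : Matrix c c ℝ) (i j : Fin n) :
    ((selMat c)ᵀ * Z * selMat c) i j =
      if hi : i ∈ c then (if hj : j ∈ c then Z ⟨i, hi⟩ ⟨j, hj⟩ else 0) else 0 := by
  rw [Matrix.mul_apply]
  have h1 : ∀ b : c, ((selMat c)ᵀ * Z) i b =
      if hi : i ∈ c then Z ⟨i, hi⟩ b else 0 := by
    intro b
    rw [Matrix.mul_apply]
    have : ∀ a : c, (selMat c)ᵀ i a * Z a b = Z a b * (if (a : Fin n) = i then 1 else 0) := by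
      intro a
      simp [selMat, Matrix.transpose_apply, mul_comm]
    rw [Finset.sum_congr rfl (fun a _ => this a)]
    exact sum_ite_coe c i (fun a => Z a b)
  have h2 : ∀ b : c, ((selMat c)ᵀ * Z) i b * selMat c b j =
      ((selMat c)ᵀ * Z) i b * (if (b : Fin n) = j then 1 else 0) := by
    intro b; simp [selMat]
  rw [Finset.sum_congr rfl (fun b _ => h2 b),
    sum_ite_coe c j (fun b => ((selMat c)ᵀ * Z) i b)]
  split_ifs with hj hi hi
  · rw [h1]
    simp [hi]
  · rw [h1]
    simp [hi]
  · rfl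
  · rfl

variable (cliques : Fin p → Finset (Fin n))

/-- the decomposition property -/
def Decomp (X : Matrix (Fin n) (Fin n) ℝ) : Prop :=
  ∃ Z : (i : Fin p) → Matrix (cliques i) (cliques i) ℝ,
    (∀ i, (Z i).PosSemidef) ∧
    X = ∑ i, (selMat (cliques i))ᵀ * Z i * selMat (cliques i)

lemma decomp_zero : Decomp cliques 0 :=
  ⟨0, fun _ => Matrix.PosSemidef.zero, by simp⟩

lemma decomp_add {X Y : Matrix (Fin n) (Fin n) ℝ} (hX : Decomp cliques X)
    (hY : Decomp cliques Y) : Decomp cliques (X + Y) := by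
  obtain ⟨Z, hZ, hZeq⟩ := hX
  obtain ⟨W, hW, hWeq⟩ := hY
  refine ⟨Z + W, fun i => (hZ i).add (hW i), ?_⟩
  rw [hZeq, hWeq, ← Finset.sum_add_distrib]
  refine Finset.sum_congr rfl fun i _ => ?_
  simp [Matrix.mul_add, Matrix.add_mul]

lemma decomp_outer (w : Fin n → ℝ) (i₀ : Fin p)
    (hsupp : ∀ j, w j ≠ 0 → j ∈ cliques i₀) :
    Decomp cliques (Matrix.of fun a b => w a * w b) := by
  classical
  refine ⟨Function.update (fun i => (0 : Matrix (cliques i) (cliques i) ℝ)) i₀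
    (Matrix.of fun a b : cliques i₀ => w a * w b), fun i => ?_, ?_⟩
  · by_cases h : i = i₀
    · subst h; rw [Function.update_self]; exact outer_psd _
    · rw [Function.update_of_ne h]; exact Matrix.PosSemidef.zero
  · rw [Finset.sum_eq_single i₀]
    · rw [Function.update_self]
      ext i j
      rw [sel_apply]
      by_cases hi : i ∈ cliques i₀
      · by_cases hj : j ∈ cliques i₀
        · simp [hi, hj]
        · have : w j = 0 := by
            by_contra h; exact hj (hsupp j h)
          simp [hi, hj, this]
      · have : w i = 0 := by
          by_contra h; exact hi (hsupp i h)
        simp [hi, this]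
    · intro i _ hi
      rw [Function.update_of_ne hi]
      simp
    · intro h
      exact absurd (Finset.mem_univ i₀) h

end Sel


end ChordalAux

namespace ChordalAux

section Main

variable {n p : ℕ}

lemma exists_max_clique (G : SimpleGraph (Fin n)) (cliques : Fin p → Finset (Fin n))
    (hcliques : ∀ s : Finset (Fin n),
      (G.IsClique (s : Set (Fin n)) ∧
        ∀ t : Finset (Fin n), G.IsClique (t : Set (Fin n)) → s ⊆ t → s = t)
      ↔ ∃ i, cliques i = s)
    (C : Finset (Fin n)) (hC : ∀ x ∈ C, ∀ y ∈ C, x ≠ y → G.Adj x y) :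
    ∃ i, C ⊆ cliques i := by
  classical
  set T := (Finset.univ : Finset (Fin n)).powerset.filter
    (fun t => C ⊆ t ∧ G.IsClique (t : Set (Fin n))) with hT
  have hCT : C ∈ T := by
    rw [hT, Finset.mem_filter]
    exact ⟨Finset.mem_powerset.2 (Finset.subset_univ _), subset_refl _,
      fun x hx y hy hne => hC x hx y hy hne⟩
  obtain ⟨t, htT, htmax⟩ := T.exists_max_image Finset.card ⟨C, hCT⟩
  rw [hT, Finset.mem_filter] at htT
  obtain ⟨-, hCt, htcl⟩ := htT
  have hmax : ∀ t' : Finset (Fin n), G.IsClique (t' : Set (Fin n)) → t ⊆ t' → t = t' := by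
    intro t' ht' hsub
    refine Finset.eq_of_subset_of_card_le hsub (htmax t' ?_)
    rw [hT, Finset.mem_filter]
    exact ⟨Finset.mem_powerset.2 (Finset.subset_univ _), hCt.trans hsub, ht'⟩
  obtain ⟨i, hi⟩ := (hcliques t).1 ⟨htcl, hmax⟩
  exact ⟨i, hi ▸ hCt⟩

lemma decomp_ind (G : SimpleGraph (Fin n)) (hch : G.IsChordal)
    (cliques : Fin p → Finset (Fin n))
    (hcliques : ∀ s : Finset (Fin n),
      (G.IsClique (s : Set (Fin n)) ∧
        ∀ t : Finset (Fin n), G.IsClique (t : Set (Fin n)) → s ⊆ t → s = t)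
      ↔ ∃ i, cliques i = s) :
    ∀ (N : ℕ) (S : Finset (Fin n)) (X : Matrix (Fin n) (Fin n) ℝ), S.card ≤ N →
      X.PosSemidef → X.IsSymm →
      (∀ i j, X i j ≠ 0 → i ∈ S ∧ j ∈ S) →
      (∀ i j, i ≠ j → X i j ≠ 0 → G.Adj i j) →
      Decomp cliques X := by
  intro N
  induction N with
  | zero =>
    intro S X hcard hpsd hsym hsupp hadj
    have hX0 : X = 0 := by
      ext i j
      by_contra h
      have := (hsupp i j h).1
      rw [Finset.card_eq_zero.1 (Nat.le_zero.1 hcard)] at this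
      simp at this
    rw [hX0]; exact decomp_zero _
  | succ N IH =>
    intro S X hcard hpsd hsym hsupp hadj
    classical
    by_cases hX0 : X = 0
    · rw [hX0]; exact decomp_zero _
    have hSne : S.Nonempty := by
      have hex : ∃ i j, X i j ≠ 0 := by
        by_contra h
        push_neg at h
        exact hX0 (by ext i j; simpa using h i j)
      obtain ⟨i, j, hij⟩ := hex
      exact ⟨i, (hsupp i j hij).1⟩
    obtain ⟨v, hv⟩ := exists_simplicial hch S hSne
    have h_ev : ∀ (a : Fin n → ℝ) (j : Fin n), a ⬝ᵥ X *ᵥ (Pi.single j 1) = ∑ k, a k * X k j := by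
      intro a j
      rw [Matrix.mulVec_single]
      simp [dotProduct]
    have h_ss : ∀ i j : Fin n, (Pi.single i 1 : Fin n → ℝ) ⬝ᵥ X *ᵥ (Pi.single j 1) = X i j := by
      intro i j
      rw [Matrix.mulVec_single, single_dotProduct]
      simp
    by_cases hvv : X v v = 0
    · -- the row and column at v vanish; just shrink S
      have hrow : ∀ j, X j v = 0 := by
        intro j
        have hcs := psd_cs hpsd (Pi.single j 1) (Pi.single v 1)
        rw [h_ss, h_ss, h_ss, hvv] at hcs
        have h2 : X j v ^ 2 = 0 := le_antisymm (by nlinarith) (sq_nonneg _)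
        exact pow_eq_zero_iff two_ne_zero |>.1 h2
      have hrow' : ∀ j, X v j = 0 := fun j => by rw [hsym.apply j v]; exact hrow j
      refine IH (S.erase v) X ?_ hpsd hsym ?_ hadj
      · have := Finset.card_erase_of_mem hv.1
        have hpos : 0 < S.card := Finset.card_pos.2 hSne
        omega
      · intro i j h
        have hiv : i ≠ v := fun he => h (he ▸ hrow' j)
        have hjv : j ≠ v := fun he => h (he ▸ hrow i)
        exact ⟨Finset.mem_erase.2 ⟨hiv, (hsupp i j h).1⟩,
          Finset.mem_erase.2 ⟨hjv, (hsupp i j h).2⟩⟩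
    · have hvnn : 0 ≤ X v v := by
        have := hpsd.dotProduct_mulVec_nonneg (Pi.single v 1)
        rwa [star_trivial, h_ss] at this
      have hvpos : 0 < X v v := lt_of_le_of_ne hvnn (Ne.symm hvv)
      set sq := Real.sqrt (X v v) with hsqdef
      have hsq : sq * sq = X v v := Real.mul_self_sqrt hvnn
      have hsqpos : 0 < sq := Real.sqrt_pos.2 hvpos
      set w : Fin n → ℝ := fun j => X j v / sq with hw
      set Y : Matrix (Fin n) (Fin n) ℝ := Matrix.of (fun a b => w a * w b) with hY
      have hYab : ∀ a b, Y a b = X a v * X b v / X v v := by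
        intro a b
        rw [hY]
        simp only [Matrix.of_apply, hw]
        rw [div_mul_div_comm, hsq]
      have hXv : ∀ j, X v j = X j v := fun j => hsym.apply j v
      have hYv : ∀ j, Y j v = X j v ∧ Y v j = X v j := by
        intro j
        constructor
        · rw [hYab, mul_div_assoc, div_self hvv, mul_one]
        · rw [hYab, hXv j, mul_comm, mul_div_assoc, div_self hvv, mul_one]
      set X' := X - Y with hX'
      have hX'v : ∀ j, X' v j = 0 ∧ X' j v = 0 := by
        intro j
        constructor
        · rw [hX']; simp [Matrix.sub_apply, (hYv j).2]
        · rw [hX']; simp [Matrix.sub_apply, (hYv j).1]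
      have hX'sym : X'.IsSymm := Matrix.IsSymm.ext fun i j => by
        rw [hX']
        simp only [Matrix.sub_apply]
        rw [hsym.apply i j, hYab, hYab]
        ring
      have hX'psd : X'.PosSemidef := by
        refine Matrix.PosSemidef.of_dotProduct_mulVec_nonneg ?_ ?_
        · rw [Matrix.IsHermitian, Matrix.conjTranspose_eq_transpose_of_trivial]
          exact hX'sym
        · intro x
          rw [star_trivial]
          have hYquad : x ⬝ᵥ Y *ᵥ x = (∑ k, x k * X k v) ^ 2 / X v v := by
            rw [hY, outer_quad]
            have hsum : (∑ b, w b * x b) = (∑ k, x k * X k v) / sq := by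
              rw [Finset.sum_div]
              exact Finset.sum_congr rfl fun b _ => by rw [hw]; ring
            rw [hsum, div_pow, pow_two, pow_two, hsq]
          rw [hX', Matrix.sub_mulVec, dotProduct_sub, hYquad, sub_nonneg,
            div_le_iff₀ hvpos]
          have hcs := psd_cs hpsd x (Pi.single v 1)
          rw [h_ev x v, h_ss] at hcs
          exact hcs
      have hwsupp : ∀ j, w j ≠ 0 → X j v ≠ 0 := by
        intro j hj h0
        exact hj (by rw [hw]; simp [h0])
      set C := insert v (S.filter (fun u => G.Adj v u)) with hC
      have hCclique : ∀ x ∈ C, ∀ y ∈ C, x ≠ y → G.Adj x y := by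
        intro x hx y hy hxy
        rw [hC, Finset.mem_insert, Finset.mem_filter] at hx hy
        rcases hx with rfl | ⟨hxS, hxadj⟩
        · rcases hy with rfl | ⟨hyS, hyadj⟩
          · exact absurd rfl hxy
          · exact hyadj
        · rcases hy with rfl | ⟨hyS, hyadj⟩
          · exact hxadj.symm
          · exact hv.2 x hxS y hyS hxadj hyadj hxy
      obtain ⟨i₀, hi₀⟩ := exists_max_clique G cliques hcliques C hCclique
      have hYdecomp : Decomp cliques Y := by
        rw [hY]
        refine decomp_outer cliques w i₀ (fun j hj => ?_)
        apply hi₀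
        rw [hC, Finset.mem_insert]
        have hXjv := hwsupp j hj
        by_cases hjv : j = v
        · exact Or.inl hjv
        · exact Or.inr (Finset.mem_filter.2 ⟨(hsupp j v hXjv).1, (hadj j v hjv hXjv).symm⟩)
      have hfac : ∀ i j, X i j = 0 → X' i j ≠ 0 → X i v ≠ 0 ∧ X j v ≠ 0 := by
        intro i j hXij h
        have hYij : Y i j ≠ 0 := fun hy => h (by rw [hX']; simp [Matrix.sub_apply, hXij, hy])
        constructor
        · exact fun h0 => hYij (by rw [hYab, h0]; simp)
        · exact fun h0 => hYij (by rw [hYab, h0]; simp)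
      have hX'supp : ∀ i j, X' i j ≠ 0 → i ∈ S.erase v ∧ j ∈ S.erase v := by
        intro i j h
        have hiv : i ≠ v := fun he => h (he ▸ (hX'v j).1)
        have hjv : j ≠ v := fun he => h (by rw [he]; exact (hX'v i).2)
        have hmem : i ∈ S ∧ j ∈ S := by
          by_cases hX : X i j = 0
          · obtain ⟨h1, h2⟩ := hfac i j hX h
            exact ⟨(hsupp i v h1).1, (hsupp j v h2).1⟩
          · exact hsupp i j hX
        exact ⟨Finset.mem_erase.2 ⟨hiv, hmem.1⟩, Finset.mem_erase.2 ⟨hjv, hmem.2⟩⟩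
      have hX'adj : ∀ i j, i ≠ j → X' i j ≠ 0 → G.Adj i j := by
        intro i j hij h
        by_cases hX : X i j = 0
        · obtain ⟨h1, h2⟩ := hfac i j hX h
          have hiv : i ≠ v := fun he => h (he ▸ (hX'v j).1)
          have hjv : j ≠ v := fun he => h (by rw [he]; exact (hX'v i).2)
          exact hv.2 i (hsupp i v h1).1 j (hsupp j v h2).1
            (hadj i v hiv h1).symm (hadj j v hjv h2).symm hij
        · exact hadj i j hij hX
      have hrec : Decomp cliques X' := by
        refine IH (S.erase v) X' ?_ hX'psd hX'sym hX'supp hX'adj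
        have := Finset.card_erase_of_mem hv.1
        have hpos : 0 < S.card := Finset.card_pos.2 hSne
        omega
      have hXsum : X = Y + X' := by rw [hX']; abel
      rw [hXsum]
      exact decomp_add cliques hYdecomp hrec

end Main

end ChordalAux

/-- Chordal decomposition theorem: a symmetric matrix with chordal sparsity pattern is
PSD iff it is a sum `Σ_i P_iᵀ Z_i P_i` over its maximal cliques with each `Z_i` PSD. -/
theorem chordal_decomposition {n p : ℕ} (X : Matrix (Fin n) (Fin n) ℝ)
    (hX : X.IsSymm)
    (G : SimpleGraph (Fin n))
    (hG : ∀ i j, G.Adj i j ↔ i ≠ j ∧ X i j ≠ 0)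
    (hchordal : G.IsChordal)
    (cliques : Fin p → Finset (Fin n))
    (hcliques : ∀ s : Finset (Fin n),
      (G.IsClique (s : Set (Fin n)) ∧
        ∀ t : Finset (Fin n), G.IsClique (t : Set (Fin n)) → s ⊆ t → s = t)
      ↔ ∃ i, cliques i = s) :
    X.PosSemidef ↔
      ∃ Z : (i : Fin p) → Matrix (cliques i) (cliques i) ℝ,
        (∀ i, (Z i).PosSemidef) ∧
        X = ∑ i, (selMat (cliques i))ᵀ * Z i * selMat (cliques i) := by
  constructor
  · intro hpsd
    obtain ⟨Z, h1, h2⟩ := ChordalAux.decomp_ind G hchordal cliques hcliques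
      (Finset.univ : Finset (Fin n)).card Finset.univ X le_rfl hpsd hX
      (fun i j _ => ⟨Finset.mem_univ i, Finset.mem_univ j⟩)
      (fun i j hij h => (hG i j).2 ⟨hij, h⟩)
    exact ⟨Z, h1, h2⟩
  · rintro ⟨Z, hZ, rfl⟩
    refine Finset.sum_induction _ _ (fun a b ha hb => ha.add hb) Matrix.PosSemidef.zero
      fun i _ => ?_
    have := (hZ i).conjTranspose_mul_mul_same (selMat (cliques i))
    rwa [Matrix.conjTranspose_eq_transpose_of_trivial] at this
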